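/- Every graph automorphism φ of the square grid graph G_S is an affine map: there exist a 2×2 signed permutation matrix A and a vector b ∈ ℤ² such that φ(x) = A·x + b for all x ∈ ℤ². In particular every automorphism of G_S extends to an isometry of the Euclidean plane, namely a translation, a rotation by a multiple of 90°, a reflection, or a glide reflection. -/

import Mathlib

/-- The square grid graph `G_S`: vertex set `ℤ × ℤ`, with `u ~ v` iff
`|u₁ − v₁| + |u₂ − v₂| = 1`. -/
def GS : SimpleGraph (ℤ × ℤ) where
  Adj u v := |u.1 - v.1| + |u.2 - v.2| = 1
  symm := by
    constructor
    intro u v h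
    rwa [abs_sub_comm u.1 v.1, abs_sub_comm u.2 v.2] at h
  loopless := by
    constructor
    intro u h
    simp at h

namespace SquareGridAux

lemma unit_cases (p1 p2 : ℤ) (hp : |p1| + |p2| = 1) :
    (p1 = 1 ∧ p2 = 0) ∨ (p1 = -1 ∧ p2 = 0) ∨ (p1 = 0 ∧ p2 = 1) ∨ (p1 = 0 ∧ p2 = -1) := by
  simp only [Int.abs_eq_natAbs] at hp
  omega

lemma L1 (p1 p2 q1 q2 r1 r2 : ℤ)
    (hp : |p1| + |p2| = 1) (hq : |q1| + |q2| = 1) (hr : |r1| + |r2| = 1)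
    (hpq : ¬(p1 = q1 ∧ p2 = q2)) (hrp : ¬(r1 = -p1 ∧ r2 = -p2))
    (hs : |p1 + r1 - q1| + |p2 + r2 - q2| = 1) : r1 = q1 ∧ r2 = q2 := by
  have Hp := unit_cases _ _ hp
  have Hq := unit_cases _ _ hq
  have Hr := unit_cases _ _ hr
  have Hs := unit_cases _ _ hs
  omega

lemma L2 (p1 p2 x1 x2 w1 w2 : ℤ) (hp : |p1| + |p2| = 1)
    (h1 : |x1 - w1| + |x2 - w2| = 1)
    (h2 : |x1 + 2*p1 - w1| + |x2 + 2*p2 - w2| = 1) :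
    w1 = x1 + p1 ∧ w2 = x2 + p2 := by
  have Hp := unit_cases _ _ hp
  have H1 := unit_cases _ _ h1
  have H2 := unit_cases _ _ h2
  omega

lemma adjGS {u v : ℤ × ℤ} : GS.Adj u v ↔ |u.1 - v.1| + |u.2 - v.2| = 1 := Iff.rfl

lemma adj_iff' {u v : ℤ × ℤ} : GS.Adj u v ↔ |v.1 - u.1| + |v.2 - u.2| = 1 := by
  rw [adjGS, abs_sub_comm u.1 v.1, abs_sub_comm u.2 v.2]

lemma adj_add {x p : ℤ × ℤ} (hp : |p.1| + |p.2| = 1) : GS.Adj x (x + p) := by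
  rw [adj_iff']
  simpa using hp

/-- Straightness: images of collinear triples are collinear. -/
lemma straight (φ : GS ≃g GS) (x p : ℤ × ℤ) (hp : |p.1| + |p.2| = 1) :
    φ (x + p + p) - φ (x + p) = φ (x + p) - φ x := by
  set a := φ (x + p) with ha
  set b := φ x with hb
  set c := φ (x + p + p) with hc
  have hadjb : GS.Adj b a := φ.map_adj_iff.mpr (adj_add hp)
  have hadjc : GS.Adj a c := φ.map_adj_iff.mpr (adj_add hp)
  rw [adjGS] at hadjb hadjc
  by_contra hne
  set z : ℤ × ℤ := (b.1 + c.1 - a.1, b.2 + c.2 - a.2) with hz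
  have hzb : GS.Adj b z := by
    rw [adjGS]
    have e1 : b.1 - z.1 = a.1 - c.1 := by simp [hz]; ring
    have e2 : b.2 - z.2 = a.2 - c.2 := by simp [hz]; ring
    rw [e1, e2]; exact hadjc
  have hzc : GS.Adj c z := by
    rw [adjGS]
    have e1 : c.1 - z.1 = a.1 - b.1 := by simp [hz]; ring
    have e2 : c.2 - z.2 = a.2 - b.2 := by simp [hz]; ring
    rw [e1, e2, abs_sub_comm a.1 b.1, abs_sub_comm a.2 b.2]; exact hadjb
  set w := φ.symm z with hw
  have hφw : φ w = z := φ.apply_symm_apply z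
  have hw1 : GS.Adj x w := by
    rw [← φ.map_adj_iff, hφw, ← hb]; exact hzb
  have hw2 : GS.Adj (x + p + p) w := by
    rw [← φ.map_adj_iff, hφw, ← hc]; exact hzc
  rw [adjGS] at hw1 hw2
  have hw2' : |x.1 + 2 * p.1 - w.1| + |x.2 + 2 * p.2 - w.2| = 1 := by
    have e1 : x.1 + 2 * p.1 - w.1 = (x + p + p).1 - w.1 := by simp; ring
    have e2 : x.2 + 2 * p.2 - w.2 = (x + p + p).2 - w.2 := by simp; ring
    rw [e1, e2]; exact hw2
  obtain ⟨e1, e2⟩ := L2 p.1 p.2 x.1 x.2 w.1 w.2 hp hw1 hw2'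
  have : w = x + p := Prod.ext (by simpa using e1) (by simpa using e2)
  rw [this, ← ha] at hφw
  apply hne
  have h1 : c.1 - a.1 = a.1 - b.1 := by
    have := congrArg Prod.fst hφw.symm
    simp [hz] at this; omega
  have h2 : c.2 - a.2 = a.2 - b.2 := by
    have := congrArg Prod.snd hφw.symm
    simp [hz] at this; omega
  exact Prod.ext (by simp; omega) (by simp; omega)


lemma unit_e1 : |((1:ℤ),(0:ℤ)).1| + |((1:ℤ),(0:ℤ)).2| = 1 := by norm_num
lemma unit_e2 : |((0:ℤ),(1:ℤ)).1| + |((0:ℤ),(1:ℤ)).2| = 1 := by norm_num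

lemma hne_UV (φ : GS ≃g GS) (x : ℤ × ℤ) :
    (φ (x + (0,1)) - φ x ≠ φ (x + (1,0)) - φ x) ∧
    (φ (x + (0,1)) - φ x ≠ -(φ (x + (1,0)) - φ x)) := by
  constructor
  · intro h
    have := φ.injective (sub_left_injective h)
    simp [Prod.ext_iff] at this
  · intro h
    have hs := straight φ (x - (1,0)) (1,0) unit_e1
    rw [show x - (1,0) + (1,0) + (1,0) = x + (1,0) from by abel,
        show x - (1,0) + (1,0) = x from by abel] at hs
    have : φ (x + (0,1)) = φ (x - (1,0)) := by linear_combination h - hs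
    have := φ.injective this
    simp [Prod.ext_iff] at this

/-- The square lemma: the image of a unit square is a parallelogram. -/
lemma square (φ : GS ≃g GS) (x : ℤ × ℤ) :
    φ (x + (1,1)) = φ (x + (1,0)) + φ (x + (0,1)) - φ x := by
  set a := φ x with ha
  set b := φ (x + (1,0)) with hb
  set c := φ (x + (0,1)) with hc
  set d := φ (x + (1,1)) with hd
  -- p = b - a, q = c - a, r = d - b
  have hp : |(b - a).1| + |(b - a).2| = 1 := by
    have := φ.map_adj_iff.mpr (adj_add (x := x) unit_e1)
    rw [adj_iff'] at this; simpa using this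
  have hq : |(c - a).1| + |(c - a).2| = 1 := by
    have := φ.map_adj_iff.mpr (adj_add (x := x) unit_e2)
    rw [adj_iff'] at this; simpa using this
  have hr : |(d - b).1| + |(d - b).2| = 1 := by
    have hadj : GS.Adj (x + (1,0)) (x + (1,1)) := by
      have := adj_add (x := x + (1,0)) unit_e2
      rwa [show x + (1,0) + (0,1) = x + (1,1) from by abel] at this
    have := φ.map_adj_iff.mpr hadj
    rw [adj_iff'] at this; simpa using this
  have hdc : |(d - c).1| + |(d - c).2| = 1 := by
    have hadj : GS.Adj (x + (0,1)) (x + (1,1)) := by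
      have := adj_add (x := x + (0,1)) unit_e1
      rwa [show x + (0,1) + (1,0) = x + (1,1) from by abel] at this
    have := φ.map_adj_iff.mpr hadj
    rw [adj_iff'] at this; simpa using this
  have hpq : ¬((b - a).1 = (c - a).1 ∧ (b - a).2 = (c - a).2) := by
    rintro ⟨h1, h2⟩
    have : b = c := by
      apply sub_left_injective (b := a)
      exact Prod.ext h1 h2
    have := φ.injective (hb ▸ hc ▸ this)
    simp [Prod.ext_iff] at this
  have hrp : ¬((d - b).1 = -(b - a).1 ∧ (d - b).2 = -(b - a).2) := by
    rintro ⟨h1, h2⟩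
    simp only [Prod.fst_sub, Prod.snd_sub, Prod.fst_neg, Prod.snd_neg] at h1 h2
    have : d = a := Prod.ext (by omega) (by omega)
    have := φ.injective (hd ▸ ha ▸ this)
    simp [Prod.ext_iff] at this
  have hs : |((b-a).1 + (d-b).1 - (c-a).1)| + |((b-a).2 + (d-b).2 - (c-a).2)| = 1 := by
    have e1 : (b-a).1 + (d-b).1 - (c-a).1 = (d - c).1 := by simp
    have e2 : (b-a).2 + (d-b).2 - (c-a).2 = (d - c).2 := by simp
    rw [e1, e2]; exact hdc
  obtain ⟨e1, e2⟩ := L1 _ _ _ _ _ _ hp hq hr hpq hrp hs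
  have : d - b = c - a := Prod.ext e1 e2
  linear_combination this

lemma const_of_steps {α : Type*} (g : ℤ × ℤ → α)
    (h1 : ∀ x, g (x + (1,0)) = g x) (h2 : ∀ x, g (x + (0,1)) = g x) :
    ∀ x, g x = g (0,0) := by
  have hrow : ∀ n : ℤ, g (n, 0) = g (0,0) := by
    intro n
    induction n using Int.induction_on with
    | zero => rfl
    | succ k ih =>
        have := h1 ((k:ℤ), 0)
        rw [show (((k:ℤ), (0:ℤ)) + (1,0) : ℤ×ℤ) = ((k:ℤ)+1, (0:ℤ)) from by
          apply Prod.ext <;> simp] at this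
        rw [this]; exact ih
    | pred k ih =>
        have := h1 (-(k:ℤ)-1, 0)
        rw [show ((-(k:ℤ)-1, (0:ℤ)) + (1,0) : ℤ×ℤ) = (-(k:ℤ), (0:ℤ)) from by
          apply Prod.ext <;> simp] at this
        rw [← this]; exact ih
  intro x
  obtain ⟨n, m⟩ := x
  induction m using Int.induction_on with
  | zero => exact hrow n
  | succ k ih =>
      have := h2 (n, (k:ℤ))
      rw [show ((n, (k:ℤ)) + (0,1) : ℤ×ℤ) = (n, (k:ℤ)+1) from by
        apply Prod.ext <;> simp] at this
      rw [this]; exact ih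
  | pred k ih =>
      have := h2 (n, -(k:ℤ)-1)
      rw [show ((n, -(k:ℤ)-1) + (0,1) : ℤ×ℤ) = (n, -(k:ℤ)) from by
        apply Prod.ext <;> simp] at this
      rw [← this]; exact ih

lemma reflA (a b : ℤ) :
    (Matrix.of fun i j => if j = (Equiv.refl (Fin 2)) i then (![a, b]) i else 0) 0 0 = a ∧
    (Matrix.of fun i j => if j = (Equiv.refl (Fin 2)) i then (![a, b]) i else 0) 0 1 = 0 ∧
    (Matrix.of fun i j => if j = (Equiv.refl (Fin 2)) i then (![a, b]) i else 0) 1 0 = 0 ∧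
    (Matrix.of fun i j => if j = (Equiv.refl (Fin 2)) i then (![a, b]) i else 0) 1 1 = b := by
  norm_num [Matrix.of_apply]

lemma swapA (a b : ℤ) :
    (Matrix.of fun i j => if j = (Equiv.swap 0 1 : Equiv.Perm (Fin 2)) i then (![a, b]) i else 0) 0 0 = 0 ∧
    (Matrix.of fun i j => if j = (Equiv.swap 0 1 : Equiv.Perm (Fin 2)) i then (![a, b]) i else 0) 0 1 = a ∧
    (Matrix.of fun i j => if j = (Equiv.swap 0 1 : Equiv.Perm (Fin 2)) i then (![a, b]) i else 0) 1 0 = b ∧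
    (Matrix.of fun i j => if j = (Equiv.swap 0 1 : Equiv.Perm (Fin 2)) i then (![a, b]) i else 0) 1 1 = 0 := by
  norm_num [Matrix.of_apply, Equiv.swap_apply_left, Equiv.swap_apply_right]

end SquareGridAux


open SquareGridAux

/-- Every graph automorphism of the square grid graph is affine: it is
given by `x ↦ A·x + b` for a 2×2 signed permutation matrix `A` and a vector `b ∈ ℤ²`.
(In particular it extends to an isometry of the Euclidean plane: a translation, a
rotation by a multiple of 90°, a reflection, or a glide reflection.) -/
theorem square_grid_automorphism_affine (φ : GS ≃g GS) :
    ∃ A : Matrix (Fin 2) (Fin 2) ℤ,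
      (∃ σ : Equiv.Perm (Fin 2), ∃ ε : Fin 2 → ℤ, (∀ i, ε i = 1 ∨ ε i = -1) ∧
        ∀ i j, A i j = if j = σ i then ε i else 0) ∧
      ∃ b : ℤ × ℤ, ∀ x : ℤ × ℤ,
        φ x = (A 0 0 * x.1 + A 0 1 * x.2 + b.1, A 1 0 * x.1 + A 1 1 * x.2 + b.2) := by
  classical
  have stepU1 : ∀ x : ℤ×ℤ, φ (x + (1,0) + (1,0)) - φ (x + (1,0)) = φ (x + (1,0)) - φ x :=
    fun x => straight φ x (1,0) unit_e1
  have stepU2 : ∀ x : ℤ×ℤ, φ (x + (0,1) + (1,0)) - φ (x + (0,1)) = φ (x + (1,0)) - φ x := by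
    intro x
    rw [show x + (0,1) + (1,0) = x + (1,1) from by abel, square φ x]
    abel
  have stepV2 : ∀ x : ℤ×ℤ, φ (x + (0,1) + (0,1)) - φ (x + (0,1)) = φ (x + (0,1)) - φ x :=
    fun x => straight φ x (0,1) unit_e2
  have stepV1 : ∀ x : ℤ×ℤ, φ (x + (1,0) + (0,1)) - φ (x + (1,0)) = φ (x + (0,1)) - φ x := by
    intro x
    rw [show x + (1,0) + (0,1) = x + (1,1) from by abel, square φ x]
    abel
  set U : ℤ × ℤ := φ ((0,0) + (1,0)) - φ (0,0) with hUdef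
  set V : ℤ × ℤ := φ ((0,0) + (0,1)) - φ (0,0) with hVdef
  have hU : ∀ x : ℤ×ℤ, φ (x + (1,0)) - φ x = U :=
    const_of_steps (fun x => φ (x + (1,0)) - φ x) stepU1 stepU2
  have hV : ∀ x : ℤ×ℤ, φ (x + (0,1)) - φ x = V :=
    const_of_steps (fun x => φ (x + (0,1)) - φ x) stepV1 stepV2
  have hU' : ∀ x : ℤ×ℤ, φ (x + (1,0)) = φ x + U := fun x => by rw [← hU x]; abel
  have hV' : ∀ x : ℤ×ℤ, φ (x + (0,1)) = φ x + V := fun x => by rw [← hV x]; abel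
  -- units
  have hUu : |U.1| + |U.2| = 1 := by
    have := φ.map_adj_iff.mpr (adj_add (x := ((0,0) : ℤ×ℤ)) unit_e1)
    rw [adj_iff'] at this; simpa [hUdef] using this
  have hVu : |V.1| + |V.2| = 1 := by
    have := φ.map_adj_iff.mpr (adj_add (x := ((0,0) : ℤ×ℤ)) unit_e2)
    rw [adj_iff'] at this; simpa [hVdef] using this
  -- the affine formula
  have col : ∀ m : ℤ, φ (0, m) = ((φ (0,0)).1 + m * V.1, (φ (0,0)).2 + m * V.2) := by
    intro m
    induction m using Int.induction_on with
    | zero => simp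
    | succ k ih =>
        have h := hV' (0, (k:ℤ))
        rw [show (((0:ℤ), (k:ℤ)) + (0,1) : ℤ×ℤ) = ((0:ℤ), (k:ℤ)+1) from by
          apply Prod.ext <;> simp] at h
        rw [h, ih]
        apply Prod.ext <;> simp <;> ring
    | pred k ih =>
        have h := hV' ((0:ℤ), -(k:ℤ)-1)
        rw [show (((0:ℤ), -(k:ℤ)-1) + (0,1) : ℤ×ℤ) = ((0:ℤ), -(k:ℤ)) from by
          apply Prod.ext <;> simp] at h
        have h2 : φ ((0:ℤ), -(k:ℤ)-1) = φ ((0:ℤ), -(k:ℤ)) - V := by rw [h]; abel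
        rw [h2, ih]
        apply Prod.ext <;> simp <;> ring
  have key : ∀ n m : ℤ, φ (n, m) =
      ((φ (0,0)).1 + n * U.1 + m * V.1, (φ (0,0)).2 + n * U.2 + m * V.2) := by
    intro n m
    induction n using Int.induction_on with
    | zero => rw [col m]; apply Prod.ext <;> simp
    | succ k ih =>
        have h := hU' ((k:ℤ), m)
        rw [show (((k:ℤ), m) + (1,0) : ℤ×ℤ) = ((k:ℤ)+1, m) from by
          apply Prod.ext <;> simp] at h
        rw [h, ih]
        apply Prod.ext <;> simp <;> ring
    | pred k ih =>
        have h := hU' ((-(k:ℤ)-1), m)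
        rw [show (((-(k:ℤ)-1), m) + (1,0) : ℤ×ℤ) = ((-(k:ℤ)), m) from by
          apply Prod.ext <;> simp] at h
        have h2 : φ ((-(k:ℤ)-1), m) = φ ((-(k:ℤ)), m) - U := by rw [h]; abel
        rw [h2, ih]
        apply Prod.ext <;> simp <;> ring
  -- perpendicularity
  have hcase : (U.2 = 0 ∧ V.1 = 0 ∧ (U.1 = 1 ∨ U.1 = -1) ∧ (V.2 = 1 ∨ V.2 = -1)) ∨
      (U.1 = 0 ∧ V.2 = 0 ∧ (U.2 = 1 ∨ U.2 = -1) ∧ (V.1 = 1 ∨ V.1 = -1)) := by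
    have h1 := unit_cases U.1 U.2 hUu
    have h2 := unit_cases V.1 V.2 hVu
    have h3 : ¬(V.1 = U.1 ∧ V.2 = U.2) := by
      rintro ⟨a, b⟩
      exact (hne_UV φ (0,0)).1 (Prod.ext a b)
    have h4 : ¬(V.1 = -U.1 ∧ V.2 = -U.2) := by
      rintro ⟨a, b⟩
      refine (hne_UV φ (0,0)).2 (Prod.ext ?_ ?_)
      · rw [Prod.fst_neg]; exact a
      · rw [Prod.snd_neg]; exact b
    omega
  rcases hcase with ⟨hU2, hV1, hU1, hV2⟩ | ⟨hU1, hV2, hU2, hV1⟩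
  · obtain ⟨e00, e01, e10, e11⟩ := reflA U.1 V.2
    refine ⟨Matrix.of fun i j => if j = (Equiv.refl (Fin 2)) i then (![U.1, V.2]) i else 0,
      ⟨Equiv.refl _, ![U.1, V.2], ?_, fun i j => rfl⟩, φ (0,0), ?_⟩
    · intro i
      fin_cases i
      · exact hU1
      · exact hV2
    · intro x
      obtain ⟨n, m⟩ := x
      rw [key n m, e00, e01, e10, e11, hV1, hU2, Prod.mk.injEq]
      constructor <;> ring
  · obtain ⟨e00, e01, e10, e11⟩ := swapA V.1 U.2
    refine ⟨Matrix.of fun i j => if j = (Equiv.swap 0 1 : Equiv.Perm (Fin 2)) i then (![V.1, U.2]) i else 0,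
      ⟨Equiv.swap 0 1, ![V.1, U.2], ?_, fun i j => rfl⟩, φ (0,0), ?_⟩
    · intro i
      fin_cases i
      · exact hV1
      · exact hU2
    · intro x
      obtain ⟨n, m⟩ := x
      rw [key n m, e00, e01, e10, e11, hU1, hV2, Prod.mk.injEq]
      constructor <;> ring
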